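/- A virtually cyclic normal subgroup of a Gromov hyperbolic group is either finite or of finite index. -/

import Mathlib

open scoped Classical

noncomputable section

/-! ## Abstract simplicial complexes and their geometric realizations -/

/-- An abstract simplicial complex on the vertex type `V`: a family of nonempty finite
subsets of `V` (the faces, or simplices), closed under passing to nonempty subsets. -/
structure SComplex (V : Type) : Type where
  faces : Set (Finset V)
  not_empty_mem : ∅ ∉ faces
  down_closed : ∀ ⦃s t : Finset V⦄, s ∈ faces → t ⊆ s → t.Nonempty → t ∈ faces

namespace SComplex

variable {V W : Type}

/-- The geometric realization of an abstract simplicial complex: the set of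
convex-combination functions `V → ℝ` supported on a single face (with the topology
inherited from the product topology on `V → ℝ`). -/
def space (K : SComplex V) : Set (V → ℝ) :=
  {f | (∃ s ∈ K.faces, ∀ v, f v ≠ 0 → v ∈ s) ∧ (∀ v, 0 ≤ f v) ∧ ∑ᶠ v, f v = 1}

/-- `L` is a subcomplex of `K`. -/
def IsSubcomplex (L K : SComplex V) : Prop := L.faces ⊆ K.faces

theorem space_mono {L K : SComplex V} (h : L.IsSubcomplex K) : L.space ⊆ K.space := by
  rintro f ⟨⟨s, hs, hsupp⟩, hpos, hsum⟩
  exact ⟨⟨s, h hs, hsupp⟩, hpos, hsum⟩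

/-- The `n`-skeleton of a simplicial complex: all faces of dimension at most `n`. -/
def skeleton (K : SComplex V) (n : ℕ) : SComplex V where
  faces := {s | s ∈ K.faces ∧ s.card ≤ n + 1}
  not_empty_mem h := K.not_empty_mem h.1
  down_closed := by
    intro s t hs hts ht
    exact ⟨K.down_closed hs.1 hts ht, (Finset.card_le_card hts).trans hs.2⟩

theorem skeleton_isSubcomplex (K : SComplex V) (n : ℕ) : (K.skeleton n).IsSubcomplex K :=
  fun _ hs => hs.1

/-- The vertex set of a simplicial complex. -/
def vertexSet (K : SComplex V) : Set V := {v | ({v} : Finset V) ∈ K.faces}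

/-- A simplicial complex is finite dimensional if the cardinality of faces is bounded. -/
def FiniteDim (K : SComplex V) : Prop := ∃ n : ℕ, ∀ s ∈ K.faces, s.card ≤ n + 1

/-- `K.compl M` is `X − M`: the smallest subcomplex of `K` containing the set-theoretic
complement of (the realization of) the subcomplex `M`; combinatorially it is generated by
the faces of `K` that do not belong to `M`. -/
def compl (K M : SComplex V) : SComplex V where
  faces := {t | t.Nonempty ∧ ∃ s ∈ K.faces, s ∉ M.faces ∧ t ⊆ s}
  not_empty_mem h := Finset.not_nonempty_empty h.1
  down_closed := by
    rintro s t ⟨-, u, hu, huM, hsu⟩ hts ht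
    exact ⟨ht, u, hu, huM, hts.trans hsu⟩

/-- A flag simplicial complex: every finite set of vertices that are pairwise joined by
edges spans a face. -/
def Flag (K : SComplex V) : Prop :=
  ∀ s : Finset V, s.Nonempty → (∀ v ∈ s, ∀ w ∈ s, ({v, w} : Finset V) ∈ K.faces) →
    s ∈ K.faces

/-- The full subcomplex of `K` spanned by the vertex subset `A`. -/
def fullSub (K : SComplex V) (A : Set V) : SComplex V where
  faces := {s | s ∈ K.faces ∧ ↑s ⊆ A}
  not_empty_mem h := K.not_empty_mem h.1
  down_closed := by
    intro s t hs hts ht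
    exact ⟨K.down_closed hs.1 hts ht, (Finset.coe_subset.mpr hts).trans hs.2⟩

/-- The intersection of two (sub)complexes. -/
def inter (K L : SComplex V) : SComplex V where
  faces := K.faces ∩ L.faces
  not_empty_mem h := K.not_empty_mem h.1
  down_closed := by
    intro s t hs hts ht
    exact ⟨K.down_closed hs.1 hts ht, L.down_closed hs.2 hts ht⟩

/-- The link of a simplex `σ` in `K`. -/
def link (K : SComplex V) (σ : Finset V) : SComplex V where
  faces := {τ | τ.Nonempty ∧ Disjoint τ σ ∧ τ ∪ σ ∈ K.faces}
  not_empty_mem h := Finset.not_nonempty_empty h.1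
  down_closed := by
    intro s t hs hts ht
    exact ⟨ht, hs.2.1.mono_left hts,
      K.down_closed hs.2.2 (Finset.union_subset_union_left hts)
        (ht.mono Finset.subset_union_left)⟩

/-- A simplicial complex is aspherical if all of its higher homotopy groups
(at every basepoint of its realization) vanish. -/
def Aspherical (K : SComplex V) : Prop :=
  ∀ n : ℕ, 2 ≤ n → ∀ x : ↥K.space, Subsingleton (HomotopyGroup (Fin n) ↥K.space x)

/-- A flag simplicial complex is SimpHAtic (simplicially hereditarily aspherical) if
every full subcomplex of it is aspherical. -/
def SimpHAtic (K : SComplex V) : Prop :=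
  K.Flag ∧ ∀ A : Set V, (K.fullSub A).Aspherical

end SComplex

/-- A simplicial map between simplicial complexes (given on vertices): faces map to faces. -/
def IsSimplicialMap {V W : Type} (K : SComplex V) (L : SComplex W) (f : V → W) : Prop :=
  ∀ s ∈ K.faces, s.image f ∈ L.faces

/-! ## Homotopy pro-groups at infinity -/

/-- The round `n`-sphere in `ℝ^(n+1)`. -/
def euclSphere (n : ℕ) : Set (EuclideanSpace ℝ (Fin (n + 1))) := Metric.sphere 0 1

/-- The closed `(n+1)`-ball in `ℝ^(n+1)`. -/
def euclBall (n : ℕ) : Set (EuclideanSpace ℝ (Fin (n + 1))) := Metric.closedBall 0 1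

/-- The `n`-th homotopy pro-group at infinity of the complex `K` vanishes
(`π_n^∞(K) = 0`): for every finite subcomplex `M` of `K` there is a subcomplex
`M' ⊇ M` with finite `(n+1)`-skeleton such that every (continuous) map
`Sⁿ → K − M'` extends to a map `B^{n+1} → K − M`. -/
def PiInftyVanishes {V : Type} (K : SComplex V) (n : ℕ) : Prop :=
  ∀ M : SComplex V, M.IsSubcomplex K → M.faces.Finite →
    ∃ M' : SComplex V, M'.IsSubcomplex K ∧ M.IsSubcomplex M' ∧
      (M'.skeleton (n + 1)).faces.Finite ∧
      ∀ f : EuclideanSpace ℝ (Fin (n + 1)) → V → ℝ,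
        ContinuousOn f (euclSphere n) → f '' euclSphere n ⊆ (K.compl M').space →
        ∃ F : EuclideanSpace ℝ (Fin (n + 1)) → V → ℝ,
          ContinuousOn F (euclBall n) ∧ F '' euclBall n ⊆ (K.compl M).space ∧
          ∀ x ∈ euclSphere n, F x = f x

/-! ## Group actions on simplicial complexes -/

section Actions

variable {G V : Type} [Group G]

/-- `ρ` is an action of `G` on the complex `K` by simplicial automorphisms. -/
def IsSimplicialAction (ρ : G →* Equiv.Perm V) (K : SComplex V) : Prop :=
  ∀ g : G, ∀ s ∈ K.faces, s.image (ρ g) ∈ K.faces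

/-- The action is proper: all cell (face) stabilizers are finite. -/
def ProperAction (ρ : G →* Equiv.Perm V) (K : SComplex V) : Prop :=
  ∀ s ∈ K.faces, {g : G | s.image (ρ g) = s}.Finite

/-- The action is free: all cell (face) stabilizers are trivial. -/
def FreeAction (ρ : G →* Equiv.Perm V) (K : SComplex V) : Prop :=
  ∀ g : G, ∀ s ∈ K.faces, s.image (ρ g) = s → g = 1

/-- The `n`-skeleton of `K` is finite mod `G`: finitely many `G`-orbits of faces. -/
def CocompactSkeleton (ρ : G →* Equiv.Perm V) (K : SComplex V) (n : ℕ) : Prop :=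
  ∃ T : Set (Finset V), T.Finite ∧
    ∀ s ∈ (K.skeleton n).faces, ∃ g : G, ∃ t ∈ T, t.image (ρ g) = s

/-- A geometric action: a simplicial action on a finite-dimensional contractible complex,
with finite cell stabilizers and every skeleton finite mod `G`. -/
def GeometricAction (ρ : G →* Equiv.Perm V) (K : SComplex V) : Prop :=
  IsSimplicialAction ρ K ∧ K.FiniteDim ∧ ContractibleSpace ↥K.space ∧
    ProperAction ρ K ∧ ∀ n : ℕ, CocompactSkeleton ρ K n

end Actions

/-- An `n`-connected topological space: nonempty and all homotopy groups `π_k`, `k ≤ n`,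
are trivial at every basepoint. -/
def NConnectedSpace (X : Type) [TopologicalSpace X] (n : ℕ) : Prop :=
  Nonempty X ∧ ∀ k : ℕ, k ≤ n → ∀ x : X, Subsingleton (HomotopyGroup (Fin k) X x)

/-- `π_n^∞(G) = 0` for a group `G`: for every (equivalently, some) `n`-connected proper
`G`-complex with `(n+1)`-skeleton finite mod `G`, the `n`-th homotopy pro-group at
infinity vanishes. -/
def GroupPiInftyVanishes (G : Type) [Group G] (n : ℕ) : Prop :=
  ∀ (V : Type) (K : SComplex V) (ρ : G →* Equiv.Perm V),
    IsSimplicialAction ρ K → ProperAction ρ K → NConnectedSpace ↥K.space n →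
      CocompactSkeleton ρ K (n + 1) → PiInftyVanishes K n

/-- `π_n^∞(G) ≠ 0` for a group `G`: for some (equivalently, every) `n`-connected proper
`G`-complex with `(n+1)`-skeleton finite mod `G`, the `n`-th homotopy pro-group at
infinity does not vanish. -/
def GroupPiInftyNonzero (G : Type) [Group G] (n : ℕ) : Prop :=
  ∃ (V : Type) (K : SComplex V) (ρ : G →* Equiv.Perm V),
    IsSimplicialAction ρ K ∧ ProperAction ρ K ∧ NConnectedSpace ↥K.space n ∧
      CocompactSkeleton ρ K (n + 1) ∧ ¬ PiInftyVanishes K n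

/-! ## Group-theoretic notions -/

/-- A group is finitely presented if it is isomorphic to a presented group on finitely
many generators with finitely many relators. -/
def FinitelyPresentedGroup (G : Type) [Group G] : Prop :=
  ∃ (m : ℕ) (rels : Finset (FreeGroup (Fin m))),
    Nonempty (PresentedGroup (rels : Set (FreeGroup (Fin m))) ≃* G)

/-- A group is free if it is isomorphic to a free group on some set. -/
def IsFreeGroupProp (G : Type) [Group G] : Prop :=
  ∃ S : Type, Nonempty (FreeGroup S ≃* G)

/-- A group is virtually free if it has a free subgroup of finite index. -/
def VirtuallyFree (G : Type) [Group G] : Prop :=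
  ∃ H : Subgroup G, H.FiniteIndex ∧ IsFreeGroupProp ↥H

/-- A group is virtually non-abelian free if it has a non-abelian free subgroup of
finite index. -/
def VirtuallyNonabelianFree (G : Type) [Group G] : Prop :=
  ∃ H : Subgroup G, H.FiniteIndex ∧ IsFreeGroupProp ↥H ∧ ¬ ∀ a b : ↥H, a * b = b * a

/-- A group has type `F_n` if it admits a free simplicial action on a contractible
complex whose `n`-skeleton is finite mod `G`. -/
def HasTypeF (G : Type) [Group G] (n : ℕ) : Prop :=
  ∃ (V : Type) (K : SComplex V) (ρ : G →* Equiv.Perm V),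
    IsSimplicialAction ρ K ∧ FreeAction ρ K ∧ ContractibleSpace ↥K.space ∧
      CocompactSkeleton ρ K n

/-- A group is SimpHAtic if it acts geometrically on a simply connected SimpHAtic
simplicial complex. -/
def IsSimpHAticGroup (G : Type) [Group G] : Prop :=
  ∃ (V : Type) (K : SComplex V) (ρ : G →* Equiv.Perm V),
    GeometricAction ρ K ∧ SimplyConnectedSpace ↥K.space ∧ K.SimpHAtic

/-! ## Cayley graphs, word metric, hyperbolicity -/

/-- The Cayley graph of `G` with respect to a (symmetrized) generating set `S`. -/
def cayleyGraph (G : Type) [Group G] (S : Set G) : SimpleGraph G where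
  Adj g h := g ≠ h ∧ (g⁻¹ * h ∈ S ∨ h⁻¹ * g ∈ S)
  symm := ⟨fun g h hx => ⟨hx.1.symm, hx.2.symm⟩⟩
  loopless := ⟨fun g hg => hg.1 rfl⟩

/-- A finitely generated group is (Gromov) hyperbolic: for some finite generating set,
the word metric (= graph metric on the Cayley graph) satisfies the `δ`-hyperbolic
four-point condition. -/
def IsHyperbolicGroup (G : Type) [Group G] : Prop :=
  ∃ S : Finset G, Subgroup.closure (S : Set G) = ⊤ ∧
    ∃ δ : ℕ, ∀ x y z w : G,
      (cayleyGraph G ↑S).dist x z + (cayleyGraph G ↑S).dist y w ≤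
        max ((cayleyGraph G ↑S).dist x y + (cayleyGraph G ↑S).dist z w)
          ((cayleyGraph G ↑S).dist x w + (cayleyGraph G ↑S).dist y z) + 2 * δ

/-! ## Systolic and weakly systolic complexes -/

namespace SComplex

variable {V : Type}

/-- `K` contains a full cycle of length `m`: an embedded `m`-cycle with no chords
(hence a full subcomplex that is a triangulated circle). -/
def HasFullCycle (K : SComplex V) (m : ℕ) : Prop :=
  ∃ c : ZMod m → V, Function.Injective c ∧
    (∀ i, ({c i, c (i + 1)} : Finset V) ∈ K.faces) ∧
    ∀ i j, ({c i, c j} : Finset V) ∈ K.faces → i = j ∨ j = i + 1 ∨ i = j + 1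

/-- A flag simplicial complex is `k`-large if it has no full cycles of length `< k`. -/
def Large (K : SComplex V) (k : ℕ) : Prop :=
  K.Flag ∧ ∀ m : ℕ, 3 ≤ m → m < k → ¬ K.HasFullCycle m

/-- A complex is locally `k`-large if all links of its faces are `k`-large. -/
def LocallyLarge (K : SComplex V) (k : ℕ) : Prop :=
  ∀ σ ∈ K.faces, (K.link σ).Large k

/-- A systolic complex: a simply connected, locally `6`-large flag simplicial complex. -/
def Systolic (K : SComplex V) : Prop :=
  K.Flag ∧ SimplyConnectedSpace ↥K.space ∧ K.LocallyLarge 6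

/-- The `SD₂*` property: `K` is locally `5`-large, and every `5`-wheel with a pendant
triangle in `K` is contained in the `1`-ball around some vertex. -/
def SD2Star (K : SComplex V) : Prop :=
  K.LocallyLarge 5 ∧
  ∀ (w p : V) (c : ZMod 5 → V),
    Function.Injective c → w ∉ Set.range c → p ∉ Set.range c → p ≠ w →
    (∀ i, ({c i, c (i + 1)} : Finset V) ∈ K.faces) →
    (∀ i, ({w, c i} : Finset V) ∈ K.faces) →
    (∃ i, ({p, c i} : Finset V) ∈ K.faces ∧ ({p, c (i + 1)} : Finset V) ∈ K.faces) →
    ∃ z : V, (w = z ∨ ({w, z} : Finset V) ∈ K.faces) ∧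
      (p = z ∨ ({p, z} : Finset V) ∈ K.faces) ∧
      ∀ i, c i = z ∨ ({c i, z} : Finset V) ∈ K.faces

/-- A weakly systolic complex: a simply connected flag simplicial complex with the
`SD₂*` property. -/
def WeaklySystolic (K : SComplex V) : Prop :=
  K.Flag ∧ SimplyConnectedSpace ↥K.space ∧ K.SD2Star

/-- A weakly systolic complex with `SD₂*` links. -/
def WeaklySystolicWithSD2StarLinks (K : SComplex V) : Prop :=
  K.WeaklySystolic ∧ ∀ σ ∈ K.faces, (K.link σ).SD2Star

end SComplex

/-! ## Nonpositively curved 2-complexes -/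

/-- Every pair of points has a metric midpoint (geodesicity, for complete spaces). -/
def MidpointSpace (Y : Type) [MetricSpace Y] : Prop :=
  ∀ x y : Y, ∃ m : Y, dist x m = dist x y / 2 ∧ dist m y = dist x y / 2

/-- The CAT(0) (CN-)inequality holds for points of the subset `s`. -/
def CAT0On (Y : Type) [MetricSpace Y] (s : Set Y) : Prop :=
  ∀ x ∈ s, ∀ y ∈ s, ∀ z ∈ s, ∀ m ∈ s,
    dist y m = dist y z / 2 → dist m z = dist y z / 2 →
    dist x m ^ 2 ≤ (dist x y ^ 2 + dist x z ^ 2) / 2 - dist y z ^ 2 / 4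

/-- Locally CAT(0): each point has a ball on which the CAT(0) inequality holds. -/
def LocallyCAT0 (Y : Type) [MetricSpace Y] : Prop :=
  ∀ p : Y, ∃ ε : ℝ, 0 < ε ∧ CAT0On Y (Metric.ball p ε)

/-- A witness that the 2-complex `K` carries a nonpositively curved (locally CAT(0))
piecewise Euclidean geometry: a geodesic, locally CAT(0) metric model `Y` of the
realization of `K`, in which each (at most 2-dimensional) simplex embeds isometrically
into the Euclidean plane. -/
def NPC2Witness {V : Type} (K : SComplex V) (Y : Type) [MetricSpace Y] : Prop :=
  ∃ h : ↥K.space ≃ₜ Y, MidpointSpace Y ∧ LocallyCAT0 Y ∧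
    ∀ s ∈ K.faces,
      ∃ φ : ↥(⇑h '' {x : ↥K.space | ∀ v, (x : V → ℝ) v ≠ 0 → v ∈ s}) →
          EuclideanSpace ℝ (Fin 2), Isometry φ

/-- A nonpositively curved 2-complex: a 2-dimensional complex whose realization carries a
geodesic locally CAT(0) piecewise Euclidean metric. -/
def IsNPC2Complex {V : Type} (K : SComplex V) : Prop :=
  (∀ s ∈ K.faces, s.card ≤ 3) ∧ ∃ (Y : Type) (mY : MetricSpace Y), @NPC2Witness V K Y mY

/-! ## Graphical small cancellation complexes (via their SimpHAtic subdivisions) -/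

/-- Transport of a realization point along a permutation of the vertices. -/
def permPoint {V : Type} (e : Equiv.Perm V) (f : V → ℝ) : V → ℝ := fun v => f (e.symm v)

/-- A (simply connected) graphical small cancellation complex, encoded through the
property that an appropriate simplicial subdivision of it is SimpHAtic: `K` (with the
`G`-action `ρ`) admits a `G`-equivariant simplicial subdivision `K'` (a complex with a
geometric `G`-action, equivariantly homeomorphic to `K`, whose cells refine those of
`K`) that is a flag complex all of whose full subcomplexes are aspherical. -/
def IsGraphicalSmallCancellation {G V : Type} [Group G] (ρ : G →* Equiv.Perm V)
    (K : SComplex V) : Prop :=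
  ∃ (V' : Type) (K' : SComplex V') (ρ' : G →* Equiv.Perm V') (h : ↥K'.space ≃ₜ ↥K.space),
    K'.SimpHAtic ∧ GeometricAction ρ' K' ∧
    (∀ s' ∈ K'.faces, ∃ s ∈ K.faces, ∀ x : ↥K'.space,
      (∀ v', (x : V' → ℝ) v' ≠ 0 → v' ∈ s') → ∀ v, (h x : V → ℝ) v ≠ 0 → v ∈ s) ∧
    ∀ (g : G) (x y : ↥K'.space), (y : V' → ℝ) = permPoint (ρ' g) ↑x →
      (h y : V → ℝ) = permPoint (ρ g) ↑(h x)

/-! ## Rips complexes and asymptotic hereditary asphericity (AHA) -/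

/-- The Rips complex `P_r(A)` of a subset `A` of a space with (integer-valued) metric
`d`: faces are the nonempty finite subsets of `A` of diameter at most `r`. -/
def RipsComplex {X : Type} (d : X → X → ℕ) (A : Set X) (r : ℕ) : SComplex X where
  faces := {s | s.Nonempty ∧ ↑s ⊆ A ∧ ∀ x ∈ s, ∀ y ∈ s, d x y ≤ r}
  not_empty_mem h := Finset.not_nonempty_empty h.1
  down_closed := by
    intro s t hs hts ht
    exact ⟨ht, (Finset.coe_subset.mpr hts).trans hs.2.1,
      fun x hx y hy => hs.2.2 x (hts hx) y (hts hy)⟩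

/-- `C` is `(n; r, R)`-aspherical in `D`: every simplicial map to `P_r(C)` from a
triangulation of the `n`-sphere extends to a simplicial map to `P_R(D)` from a
triangulation of the `(n+1)`-ball whose boundary is the given sphere. -/
def NRAspherical {X : Type} (d : X → X → ℕ) (C D : Set X) (n r R : ℕ) : Prop :=
  ∀ (VT : Type) (T : SComplex VT), T.faces.Finite →
    Nonempty (↥T.space ≃ₜ ↥(euclSphere n)) →
    ∀ f : VT → X, IsSimplicialMap T (RipsComplex d C r) f →
      ∃ (W : Type) (B : SComplex (VT ⊕ W)), B.faces.Finite ∧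
        (∀ s ∈ T.faces, s.image Sum.inl ∈ B.faces) ∧
        (∃ h : ↥B.space ≃ₜ ↥(euclBall n),
          ⇑h '' {x : ↥B.space | ((x : (VT ⊕ W) → ℝ) ∘ Sum.inl) ∈ T.space ∧
              ∀ w, (x : (VT ⊕ W) → ℝ) (Sum.inr w) = 0} =
            {y : ↥(euclBall n) | (y : EuclideanSpace ℝ (Fin (n + 1))) ∈ euclSphere n}) ∧
        ∃ F : (VT ⊕ W) → X, IsSimplicialMap B (RipsComplex d D R) F ∧
          ∀ v, F (Sum.inl v) = f v

/-- A finitely generated group is asymptotically hereditarily aspherical (AHA) if, with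
respect to the word metric of some finite generating set, for every `r > 0` there is
`R ≥ r` such that every subset is `(n; r, R)`-aspherical in itself for every `n ≥ 2`. -/
def IsAHAGroup (G : Type) [Group G] : Prop :=
  ∃ S : Finset G, Subgroup.closure (S : Set G) = ⊤ ∧
    ∀ r : ℕ, 0 < r → ∃ R : ℕ, r ≤ R ∧
      ∀ (A : Set G) (n : ℕ), 2 ≤ n → NRAspherical (cayleyGraph G ↑S).dist A A n r R

/-! ## Cohomological dimension -/

open CategoryTheory in
/-- A group has finite cohomological dimension (over `ℤ`) if there is `n` such that all
cohomology groups `H^k(G, M)` vanish for `k > n` and all `G`-modules `M`. -/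
def FiniteCohDim (G : Type) [Group G] : Prop :=
  ∃ n : ℕ, ∀ (M : Rep ℤ G) (k : ℕ), n < k → Limits.IsZero (groupCohomology M k)

/-- A group has finite virtual cohomological dimension if it has a finite-index subgroup
of finite cohomological dimension. -/
def FiniteVCD (G : Type) [Group G] : Prop :=
  ∃ H : Subgroup G, H.FiniteIndex ∧ FiniteCohDim ↥H

/-! ## Miscellaneous: coverings, products, proper maps -/

/-- A simplicial covering map `p : K' → K`: a simplicial map, injective on each face,
surjective on faces, and such that each face of `K` at the image of a vertex lifts
uniquely through that vertex. -/
def IsSimplicialCovering {V' V : Type} (K' : SComplex V') (K : SComplex V)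
    (p : V' → V) : Prop :=
  IsSimplicialMap K' K p ∧
  (∀ s ∈ K'.faces, (s.image p).card = s.card) ∧
  (∀ s ∈ K.faces, ∃ s' ∈ K'.faces, s'.image p = s) ∧
  ∀ v' : V', ({v'} : Finset V') ∈ K'.faces → ∀ s ∈ K.faces, p v' ∈ s →
    ∃! s' : Finset V', s' ∈ K'.faces ∧ v' ∈ s' ∧ s'.image p = s

/-- A simplicial complex triangulating the product of the realizations of `K` and `L`
(the order complex of the product of the face posets). -/
def prodComplex {V W : Type} (K : SComplex V) (L : SComplex W) :
    SComplex (Finset V × Finset W) where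
  faces := {s | s.Nonempty ∧ (∀ p ∈ s, p.1 ∈ K.faces ∧ p.2 ∈ L.faces) ∧
    ∀ p ∈ s, ∀ q ∈ s, (p.1 ⊆ q.1 ∧ p.2 ⊆ q.2) ∨ (q.1 ⊆ p.1 ∧ q.2 ⊆ p.2)}
  not_empty_mem h := Finset.not_nonempty_empty h.1
  down_closed := by
    intro s t hs hts ht
    exact ⟨ht, fun p hp => hs.2.1 p (hts hp), fun p hp q hq => hs.2.2 p (hts hp) q (hts hq)⟩

/-- A topologically proper map: preimages of compact sets are compact. -/
def TopProper {X Y : Type} [TopologicalSpace X] [TopologicalSpace Y] (f : X → Y) : Prop :=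
  ∀ C : Set Y, IsCompact C → IsCompact (f ⁻¹' C)

/-- A map between realizations is cellular if it maps each skeleton into the
corresponding skeleton. -/
def CellularMap {V W : Type} (X : SComplex V) (Y : SComplex W)
    (f : ↥X.space → ↥Y.space) : Prop :=
  ∀ (m : ℕ) (x : ↥X.space), (x : V → ℝ) ∈ (X.skeleton m).space →
    (f x : W → ℝ) ∈ (Y.skeleton m).space

/-- Condition (∗): every simplicial map to `X` from a triangulation `S` of the 2-sphere
extends to a simplicial map to `X` from a triangulation `D` of the 3-disc whose boundary
is `S` and which has no internal vertices (`D⁰ = S⁰`). -/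
def StarCondition {V : Type} (X : SComplex V) : Prop :=
  ∀ (VS : Type) (S : SComplex VS), S.faces.Finite →
    Nonempty (↥S.space ≃ₜ ↥(euclSphere 2)) →
    ∀ f : VS → V, IsSimplicialMap S X f →
      ∃ D : SComplex VS, S.IsSubcomplex D ∧ D.vertexSet = S.vertexSet ∧
        (∃ h : ↥D.space ≃ₜ ↥(euclBall 2),
          ⇑h '' {x : ↥D.space | (x : VS → ℝ) ∈ S.space} =
            {y : ↥(euclBall 2) | (y : EuclideanSpace ℝ (Fin 3)) ∈ euclSphere 2}) ∧
        ∃ F : VS → V, IsSimplicialMap D X F ∧ ∀ v ∈ S.vertexSet, F v = f v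

/-- A group is virtually cyclic if it has a cyclic subgroup of finite index. -/
def VirtuallyCyclic (G : Type) [Group G] : Prop :=
  ∃ H : Subgroup G, H.FiniteIndex ∧ IsCyclic ↥H

namespace VCN

variable {G : Type} [Group G]

/-- left translation as a graph hom -/
def mulHom (S : Set G) (g : G) : (cayleyGraph G S) →g (cayleyGraph G S) where
  toFun := fun x => g * x
  map_rel' := by
    intro a b hab
    change _ ∧ _ at hab
    show _ ∧ _
    refine ⟨fun h => hab.1 (by simpa using h), ?_⟩
    simpa [mul_assoc] using hab.2

variable {S : Set G}

lemma reachable_mul (g : G) {x y : G} (h : (cayleyGraph G S).Reachable x y) :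
    (cayleyGraph G S).Reachable (g * x) (g * y) := by
  obtain ⟨p⟩ := h
  exact ⟨p.map (mulHom S g)⟩

lemma connected (hS : Subgroup.closure S = ⊤) : (cayleyGraph G S).Connected := by
  have key : ∀ g : G, (cayleyGraph G S).Reachable 1 g := by
    intro g
    let H : Subgroup G :=
      { carrier := {g | (cayleyGraph G S).Reachable 1 g}
        one_mem' := SimpleGraph.Reachable.refl 1
        mul_mem' := by
          intro a b ha hb
          exact ha.trans (by simpa using reachable_mul a hb)
        inv_mem' := by
          intro a ha
          have := reachable_mul a⁻¹ ha
          simpa using this.symm }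
    have : Subgroup.closure S ≤ H := by
      rw [Subgroup.closure_le]
      intro s hs
      by_cases h1 : (1 : G) = s
      · exact h1 ▸ SimpleGraph.Reachable.refl 1
      · exact SimpleGraph.Adj.reachable (⟨h1, Or.inl (by simpa using hs)⟩ : (1:G) ≠ s ∧ ((1:G)⁻¹ * s ∈ S ∨ s⁻¹ * 1 ∈ S))
    have : g ∈ H := by rw [hS] at this; exact this trivial
    exact this
  have : Nonempty G := ⟨1⟩
  exact ⟨fun x y => (key x).symm.trans (key y)⟩

variable (S) in
/-- distance -/
def d (x y : G) : ℕ := (cayleyGraph G S).dist x y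

lemma d_mul (hS : Subgroup.closure S = ⊤) (g x y : G) : d S (g * x) (g * y) = d S x y := by
  have le : ∀ (g x y : G), d S (g * x) (g * y) ≤ d S x y := by
    intro g x y
    obtain ⟨p, hp⟩ := (connected hS).exists_walk_length_eq_dist x y
    calc d S (g*x) (g*y) ≤ (p.map (mulHom S g)).length := SimpleGraph.dist_le _
    _ = d S x y := by rw [SimpleGraph.Walk.length_map]; exact hp
  refine le_antisymm (le g x y) ?_
  have := le g⁻¹ (g * x) (g * y)
  simpa using this

lemma d_comm (x y : G) : d S x y = d S y x := SimpleGraph.dist_comm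

lemma d_triangle (hS : Subgroup.closure S = ⊤) (x y z : G) : d S x z ≤ d S x y + d S y z :=
  (connected hS).dist_triangle

lemma d_self (x : G) : d S x x = 0 := SimpleGraph.dist_self

lemma d_eq_zero_iff (hS : Subgroup.closure S = ⊤) {x y : G} : d S x y = 0 ↔ x = y :=
  (connected hS).dist_eq_zero_iff

variable (S) in
/-- norm -/
def nn (x : G) : ℕ := d S 1 x

lemma d_eq_nn (hS : Subgroup.closure S = ⊤) (x y : G) : d S x y = nn S (x⁻¹ * y) := by
  have := d_mul hS x⁻¹ x y
  simpa [nn] using this.symm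

lemma nn_inv (hS : Subgroup.closure S = ⊤) (x : G) : nn S x⁻¹ = nn S x := by
  rw [nn, d_comm, d_eq_nn hS]
  simp

lemma nn_mul_le (hS : Subgroup.closure S = ⊤) (x y : G) : nn S (x * y) ≤ nn S x + nn S y := by
  have := d_triangle hS 1 x (x * y)
  rwa [d_eq_nn hS x (x*y), inv_mul_cancel_left] at this

lemma nn_eq_zero_iff (hS : Subgroup.closure S = ⊤) {x : G} : nn S x = 0 ↔ x = 1 := by
  rw [nn, d_eq_zero_iff hS]; exact eq_comm

lemma nn_conj_le (hS : Subgroup.closure S = ⊤) (p x : G) :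
    nn S (p * x * p⁻¹) ≤ nn S x + 2 * nn S p := by
  have h2 := nn_mul_le hS (p * x) p⁻¹
  have h3 := nn_mul_le hS p x
  have h4 := nn_inv hS p
  calc nn S (p * x * p⁻¹) ≤ nn S (p * x) + nn S p⁻¹ := h2
  _ ≤ nn S p + nn S x + nn S p⁻¹ := by omega
  _ = nn S x + 2 * nn S p := by omega

lemma nn_conj_ge (hS : Subgroup.closure S = ⊤) (p x : G) :
    nn S x ≤ nn S (p * x * p⁻¹) + 2 * nn S p := by
  have h1 : x = p⁻¹ * (p * x * p⁻¹) * p⁻¹⁻¹ := by group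
  calc nn S x = nn S (p⁻¹ * (p * x * p⁻¹) * p⁻¹⁻¹) := by rw [← h1]
  _ ≤ nn S (p * x * p⁻¹) + 2 * nn S p⁻¹ := nn_conj_le hS p⁻¹ _
  _ = nn S (p * x * p⁻¹) + 2 * nn S p := by rw [nn_inv hS]


lemma exists_between_walk {S : Set G} :
    ∀ {a b : G} (p : (cayleyGraph G S).Walk a b) (t : ℕ), t ≤ p.length →
      ∃ (u : G) (q1 : (cayleyGraph G S).Walk a u) (q2 : (cayleyGraph G S).Walk u b),
        q1.length ≤ t ∧ q2.length ≤ p.length - t := by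
  intro a b p
  induction p with
  | nil =>
      intro t _
      exact ⟨_, SimpleGraph.Walk.nil, SimpleGraph.Walk.nil, by simp, by simp⟩
  | @cons a a' b hadj q ih =>
      intro t ht
      match t with
      | 0 =>
          exact ⟨_, SimpleGraph.Walk.nil, SimpleGraph.Walk.cons hadj q, by simp, by simp⟩
      | (s+1) =>
          obtain ⟨u, q1, q2, hu1, hu2⟩ := ih s (by simpa using ht)
          refine ⟨u, SimpleGraph.Walk.cons hadj q1, q2, ?_, ?_⟩
          · simpa using hu1
          · simpa using hu2

lemma exists_between (hS : Subgroup.closure S = ⊤) (x y : G) (t : ℕ) (ht : t ≤ d S x y) :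
    ∃ u, d S x u = t ∧ d S u y = d S x y - t := by
  obtain ⟨p, hp⟩ := (connected hS).exists_walk_length_eq_dist x y
  have hp' : p.length = d S x y := hp
  obtain ⟨u, q1, q2, hu1, hu2⟩ := exists_between_walk p t (by omega)
  have h1 : d S x u ≤ q1.length := SimpleGraph.dist_le q1
  have h2 : d S u y ≤ q2.length := SimpleGraph.dist_le q2
  have htri := d_triangle hS x u y
  exact ⟨u, by omega, by omega⟩

open Pointwise in
lemma ball_finite (S : Finset G) (hS : Subgroup.closure (S : Set G) = ⊤) (R : ℕ) :
    {x : G | nn (S : Set G) x ≤ R}.Finite := by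
  classical
  set T : Finset G := insert 1 (S ∪ S.image (·⁻¹)) with hT
  have walk_mem : ∀ {a b : G} (p : (cayleyGraph G (S : Set G)).Walk a b),
      ∃ m ∈ (T ^ p.length : Finset G), b = a * m := by
    intro a b p
    induction p with
    | nil => exact ⟨1, by simp [Finset.mem_one], by simp⟩
    | @cons a a' b hadj q ih =>
        obtain ⟨m, hm, hbm⟩ := ih
        have hs : a⁻¹ * a' ∈ T := by
          rcases (hadj : a ≠ a' ∧ (a⁻¹ * a' ∈ (S:Set G) ∨ a'⁻¹ * a ∈ (S:Set G))).2 with h | h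
          · exact Finset.mem_insert_of_mem (Finset.mem_union_left _ h)
          · refine Finset.mem_insert_of_mem (Finset.mem_union_right _ ?_)
            refine Finset.mem_image.2 ⟨a'⁻¹ * a, h, by group⟩
        refine ⟨(a⁻¹ * a') * m, ?_, by rw [hbm]; group⟩
        rw [SimpleGraph.Walk.length_cons, pow_succ']
        exact Finset.mul_mem_mul hs hm
  apply Set.Finite.subset (T ^ R : Finset G).finite_toSet
  intro x hx
  simp only [Set.mem_setOf_eq] at hx
  obtain ⟨p, hp⟩ := (connected hS).exists_walk_length_eq_dist 1 x
  obtain ⟨m, hm, hxm⟩ := walk_mem p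
  have hx' : x ∈ (T ^ R : Finset G) := by
    rw [hxm, one_mul]
    refine Finset.pow_subset_pow_right (by simp [hT]) ?_ hm
    rw [hp]; exact hx
  exact Finset.mem_coe.mpr hx'


/-! ### Part B: the Gromov product inequality -/

variable (S) in
/-- the four-point hypothesis -/
def FourPt (δ : ℕ) : Prop := ∀ x y z w : G,
    d S x z + d S y w ≤ max (d S x y + d S z w) (d S x w + d S y z) + 2 * δ

variable (S) in
/-- doubled Gromov product -/
def E (x y w : G) : ℤ := (d S x w : ℤ) + (d S y w : ℤ) - (d S x y : ℤ)

lemma hE {δ : ℕ} (hδ : FourPt S δ) (x y z w : G) :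
    min (E S x y w) (E S y z w) - 2 * (δ : ℤ) ≤ E S x z w := by
  have h := hδ x y z w
  have c1 : d S z x = d S x z := d_comm _ _
  have c2 : d S w y = d S y w := d_comm _ _
  have c3 : d S y x = d S x y := d_comm _ _
  simp only [E]
  omega

lemma pow_cancel (w : G) (k j : ℕ) : (w ^ k)⁻¹ * w ^ (k + j) = w ^ j := by
  rw [pow_add, inv_mul_cancel_left]

/-! ### Part C: doubling and chain lemmas -/

section Chain

variable {S : Set G} {δ : ℕ} (hS : Subgroup.closure S = ⊤) (hδ : FourPt S δ) (w : G)
include hS hδ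

/-- doubling for shortest-in-conjugacy-class elements -/
lemma doubling (hmin : ∀ p : G, nn S w ≤ nn S (p * w * p⁻¹))
    (hlen : 4 * δ + 2 ≤ nn S w) :
    2 * (nn S w : ℤ) ≤ (nn S (w * w) : ℤ) + 4 * δ := by
  set h : ℕ := nn S w with hh
  set t : ℕ := (h + 1) / 2 with hts
  have e0 : d S 1 w = h := rfl
  obtain ⟨u, hu1, hu2⟩ := exists_between hS 1 w t (by rw [e0]; omega)
  rw [e0] at hu2
  -- conjugate minimality
  have hc : h ≤ nn S (u⁻¹ * w * u) := by
    have := hmin u⁻¹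
    simpa using this
  have hconj : d S u (w * u) = nn S (u⁻¹ * w * u) := by
    rw [d_eq_nn hS, mul_assoc]
  have e1 : d S (w * u) u = nn S (u⁻¹ * w * u) := by
    rw [d_comm]; exact hconj
  have e2 : d S (w * u) 1 = d S 1 (w * u) := d_comm _ _
  have e3 : d S (w * u) w = d S 1 u := by
    have := d_mul hS w⁻¹ (w * u) w
    simp only [inv_mul_cancel_left, inv_mul_cancel] at this
    rw [← this, d_comm]
  have app1 := hδ (w * u) 1 u w
  have app2 := hδ 1 w (w * u) (w * w)
  have e4 : d S w (w * w) = h := by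
    have := d_mul hS w 1 w
    simpa [e0] using this
  have e5 : d S (w * u) (w * w) = d S u w := d_mul hS w u w
  have e6 : d S w (w * u) = d S 1 u := by
    have := d_mul hS w 1 u; simpa using this
  have e7 : d S 1 (w * w) = nn S (w * w) := rfl
  rw [e0, e1, e2, e3, hu1, hu2] at app1
  rw [e4, e5, e6, e7, hu1, hu2] at app2
  omega

variable {w} in
lemma chainQ (hlen : (2 * (nn S w) : ℤ) - nn S (w * w) + 6 * δ + 1 ≤ nn S w) :
    ∀ k : ℕ, (nn S (w ^ k) : ℤ) + nn S w - nn S (w ^ (k + 1)) ≤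
      (2 * (nn S w) : ℤ) - nn S (w * w) + 2 * δ := by
  have hM0 : (nn S (w*w) : ℤ) ≤ 2 * nn S w := by
    have := nn_mul_le hS w w; omega
  intro k
  induction k with
  | zero =>
      rw [pow_zero, pow_one]
      have h1 : nn S (1 : G) = 0 := (nn_eq_zero_iff hS).2 rfl
      omega
  | succ k ih =>
      have key := hE hδ (w ^ k) 1 (w ^ (k + 2)) (w ^ (k + 1))
      have d1 : d S (w ^ k) (w ^ (k + 1)) = nn S w := by
        rw [d_eq_nn hS, pow_cancel w k 1, pow_one]
      have d2 : d S (w ^ (k+2)) (w ^ (k + 1)) = nn S w := by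
        rw [d_comm, d_eq_nn hS, pow_cancel w (k+1) 1, pow_one]
      have d3 : d S (w ^ k) (w ^ (k + 2)) = nn S (w * w) := by
        rw [d_eq_nn hS, pow_cancel w k 2, pow_two]
      have d4 : d S (w ^ k) 1 = nn S (w ^ k) := d_comm _ _
      have d5 : d S 1 (w ^ (k+1)) = nn S (w ^ (k+1)) := rfl
      have d6 : d S 1 (w ^ (k+2)) = nn S (w ^ (k+2)) := rfl
      simp only [E] at key
      rw [d1, d2, d3, d4, d5, d6] at key
      have hk2 : k + 1 + 1 = k + 2 := rfl
      rw [hk2]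
      omega

variable {w} in
lemma chain_growth (hlen : (2 * (nn S w) : ℤ) - nn S (w * w) + 6 * δ + 1 ≤ nn S w) :
    ∀ k : ℕ, (k : ℤ) * ((nn S w : ℤ) - (2 * (nn S w : ℤ) - nn S (w * w)) - 2 * δ)
      ≤ nn S (w ^ k) := by
  intro k
  induction k with
  | zero => simp
  | succ k ih =>
      have hq := chainQ hS hδ hlen k
      push_cast
      nlinarith [hq, ih]

variable {w} in
lemma chainR (hlen : (2 * (nn S w) : ℤ) - nn S (w * w) + 6 * δ + 1 ≤ nn S w) :
    ∀ j k : ℕ, (nn S (w ^ j) : ℤ) + nn S (w ^ k) - nn S (w ^ (j + k)) ≤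
      (2 * (nn S w) : ℤ) - nn S (w * w) + 4 * δ := by
  have hM0 : (nn S (w*w) : ℤ) ≤ 2 * nn S w := by
    have := nn_mul_le hS w w; omega
  intro j k
  match j, k with
  | 0, k => simp [(nn_eq_zero_iff hS).2 rfl]; omega
  | j, 0 => simp [(nn_eq_zero_iff hS).2 rfl]; omega
  | (j+1), (k+1) =>
      have key := hE hδ ((w ^ (j+1))⁻¹) (w ^ (k+1)) w 1
      have d1 : d S ((w ^ (j+1))⁻¹) (w ^ (k+1)) = nn S (w ^ (j + 1 + (k+1))) := by
        rw [d_eq_nn hS, inv_inv]; congr 1; rw [← pow_add]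
      have d2 : d S ((w ^ (j+1))⁻¹) w = nn S (w ^ (j + 2)) := by
        rw [d_eq_nn hS, inv_inv]; congr 1; exact (pow_succ w (j+1)).symm
      have d3 : d S (w ^ (k+1)) w = nn S (w ^ k) := by
        rw [d_comm, d_eq_nn hS]; congr 1; rw [pow_succ', inv_mul_cancel_left]
      have d4 : d S ((w ^ (j+1))⁻¹) 1 = nn S (w ^ (j+1)) := by
        rw [d_comm]; exact nn_inv hS _
      have d5 : d S (w ^ (k+1)) 1 = nn S (w ^ (k+1)) := d_comm _ _
      have d6 : d S w 1 = nn S w := d_comm _ _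
      simp only [E] at key
      rw [d1, d2, d3, d4, d5, d6] at key
      have q1 := chainQ hS hδ hlen (j + 1)
      have q2 := chainQ hS hδ hlen k
      have hj2 : j + 1 + 1 = j + 2 := rfl
      rw [hj2] at q1
      have hsum : j + 1 + (k + 1) = (j + 1) + (k + 1) := rfl
      omega

end Chain


/-! ### Part D: bounds along the cyclic line -/

section Line

variable {S : Set G} {δ : ℕ} (hS : Subgroup.closure S = ⊤) (hδ : FourPt S δ)
variable {c : G} {t : ℕ} {p₀ : G}
include hS hδ

lemma line_bounds (ht : 1 ≤ t)
    (hwmin : ∀ p : G, nn S (p₀ * c ^ t * p₀⁻¹) ≤ nn S (p * (p₀ * c ^ t * p₀⁻¹) * p⁻¹))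
    (hwlen : 10 * δ + 2 ≤ nn S (p₀ * c ^ t * p₀⁻¹)) :
    ∃ B₁ B₂ : ℕ,
      (∀ j k : ℕ, (nn S (c ^ j) : ℤ) + nn S (c ^ k) - nn S (c ^ (j + k)) ≤ B₂) ∧
      (∀ j : ℕ, (4 * δ + 1) * j ≤ t * (nn S (c ^ j) + B₁)) := by
  classical
  set w : G := p₀ * c ^ t * p₀⁻¹ with hw
  have hdbl := doubling hS hδ w hwmin (by omega)
  have hchain_len : (2 * (nn S w) : ℤ) - nn S (w * w) + 6 * δ + 1 ≤ nn S w := by omega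
  have hgrow := chain_growth hS hδ hchain_len
  have hR := chainR hS hδ hchain_len
  -- transfer to powers of c
  have hconjpow : ∀ k : ℕ, w ^ k = p₀ * c ^ (t * k) * p₀⁻¹ := by
    intro k
    rw [hw, conj_pow, ← pow_mul]
  have hup : ∀ k : ℕ, nn S (w ^ k) ≤ nn S (c ^ (t * k)) + 2 * nn S p₀ := by
    intro k; rw [hconjpow]; exact nn_conj_le hS _ _
  have hdown : ∀ k : ℕ, nn S (c ^ (t * k)) ≤ nn S (w ^ k) + 2 * nn S p₀ := by
    intro k; rw [hconjpow]; exact nn_conj_ge hS _ _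
  -- growth along multiples of t
  have hgrow' : ∀ k : ℕ, (k : ℤ) * (4 * δ + 1) ≤ (nn S (c ^ (t * k)) : ℤ) + 2 * nn S p₀ := by
    intro k
    have h1 := hgrow k
    have h2 := hup k
    have h2' : (nn S (w ^ k) : ℤ) ≤ nn S (c ^ (t*k)) + 2 * nn S p₀ := by exact_mod_cast h2
    have hcoef : (4 * (δ:ℤ) + 1) ≤ (nn S w : ℤ) - (2 * (nn S w : ℤ) - nn S (w * w)) - 2 * δ := by
      omega
    have h3 := mul_le_mul_of_nonneg_left hcoef (Int.natCast_nonneg k)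
    linarith
  set ρ : ℕ := (Finset.range t).sup (fun r => nn S (c ^ r)) with hρ
  have hρle : ∀ r : ℕ, r < t → nn S (c ^ r) ≤ ρ := by
    intro r hr
    exact Finset.le_sup (f := fun r => nn S (c ^ r)) (Finset.mem_range.2 hr)
  refine ⟨2 * nn S p₀ + ρ + (4 * δ + 1), 8 * δ + 6 * nn S p₀ + 4 * ρ, ?_, ?_⟩
  · -- product bound
    intro j k
    obtain ⟨a, r, hr, hj⟩ : ∃ a r, r < t ∧ j = t * a + r :=
      ⟨j / t, j % t, Nat.mod_lt _ (by omega), by rw [Nat.div_add_mod]⟩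
    obtain ⟨b, r', hr', hk⟩ : ∃ b r', r' < t ∧ k = t * b + r' :=
      ⟨k / t, k % t, Nat.mod_lt _ (by omega), by rw [Nat.div_add_mod]⟩
    have u1 : nn S (c ^ j) ≤ nn S (c ^ (t * a)) + ρ := by
      rw [hj, pow_add]
      exact le_trans (nn_mul_le hS _ _) (by have := hρle r hr; omega)
    have u2 : nn S (c ^ k) ≤ nn S (c ^ (t * b)) + ρ := by
      rw [hk, pow_add]
      exact le_trans (nn_mul_le hS _ _) (by have := hρle r' hr'; omega)
    have u3 : nn S (c ^ (t * (a + b))) ≤ nn S (c ^ (j + k)) + 2 * ρ := by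
      have hsplit : c ^ (j + k) = c ^ (t * (a+b)) * (c ^ r * c ^ r') := by
        have hexp : j + k = t * (a + b) + (r + r') := by subst hj hk; ring
        rw [hexp, pow_add, pow_add]
      have h4 : nn S (c ^ (t * (a+b))) ≤ nn S (c ^ (j+k)) + nn S ((c ^ r * c ^ r')⁻¹) := by
        calc nn S (c ^ (t*(a+b))) = nn S (c ^ (j+k) * (c ^ r * c ^ r')⁻¹) := by
              rw [hsplit, mul_inv_cancel_right]
        _ ≤ _ := nn_mul_le hS _ _
      have h5 : nn S ((c ^ r * c ^ r')⁻¹) ≤ 2 * ρ := by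
        rw [nn_inv hS]
        have h6 := nn_mul_le hS (c ^ r) (c ^ r')
        have h7 := hρle r hr
        have h8 := hρle r' hr'
        omega
      omega
    have hRab := hR a b
    have w1 := hdown a
    have w2 := hdown b
    have w3 := hup (a + b)
    omega
  · -- linear lower bound
    intro j
    obtain ⟨a, r, hr, hj⟩ : ∃ a r, r < t ∧ j = t * a + r :=
      ⟨j / t, j % t, Nat.mod_lt _ (by omega), by rw [Nat.div_add_mod]⟩
    have u1 : (nn S (c ^ (t * a)) : ℤ) ≤ nn S (c ^ j) + ρ := by
      have hsplit : c ^ (t * a) = c ^ j * (c ^ r)⁻¹ := by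
        rw [hj, pow_add, mul_inv_cancel_right]
      have h6 : nn S (c ^ (t*a)) ≤ nn S (c ^ j) + nn S ((c ^ r)⁻¹) := by
        rw [hsplit]; exact nn_mul_le hS _ _
      have h2 : nn S ((c ^ r)⁻¹) ≤ ρ := by rw [nn_inv hS]; exact hρle r hr
      exact_mod_cast le_trans h6 (by omega)
    have h1 := hgrow' a
    have ht0 : (0 : ℤ) ≤ t := by positivity
    have hj' : (j : ℤ) = t * a + r := by exact_mod_cast hj
    have hr'' : (r : ℤ) ≤ t := by exact_mod_cast le_of_lt hr
    have goal : ((4 * δ + 1) : ℤ) * j ≤ (t : ℤ) * ((nn S (c ^ j) : ℤ) + (2 * nn S p₀ + ρ + (4 * δ + 1))) := by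
      have m1 : (t : ℤ) * ((a : ℤ) * (4 * δ + 1)) ≤ t * ((nn S (c ^ (t*a)) : ℤ) + 2 * nn S p₀) :=
        mul_le_mul_of_nonneg_left h1 ht0
      have m2 : ((4 * δ + 1) : ℤ) * r ≤ (4 * δ + 1) * t :=
        mul_le_mul_of_nonneg_left hr'' (by positivity)
      have m3 : (t : ℤ) * ((nn S (c ^ (t*a)) : ℤ) + 2 * nn S p₀) ≤
          t * ((nn S (c ^ j) : ℤ) + ρ + 2 * nn S p₀) :=
        mul_le_mul_of_nonneg_left (by linarith [u1]) ht0
      calc ((4 * δ + 1) : ℤ) * j = (t : ℤ) * ((a : ℤ) * (4 * δ + 1)) + (4 * δ + 1) * r := by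
            rw [hj']; ring
      _ ≤ t * ((nn S (c ^ j) : ℤ) + ρ + 2 * nn S p₀) + (4 * δ + 1) * t := by linarith
      _ = (t : ℤ) * ((nn S (c ^ j) : ℤ) + (2 * nn S p₀ + ρ + (4 * δ + 1))) := by ring
    exact_mod_cast goal

end Line


/-! ### Part E: arithmetic helpers and the conjugation-exponent bound -/

lemma sq_le_two_pow : ∀ k : ℕ, 4 ≤ k → k * k ≤ 2 ^ k := by
  intro k
  induction k with
  | zero => omega
  | succ k ih =>
      intro hk
      rcases Nat.lt_or_ge k 4 with h | h
      · interval_cases k <;> first | omega | norm_num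
      · have h1 := ih h
        have h2 : 2 ^ (k+1) = 2 ^ k + 2 ^ k := by ring
        have h3 : 2 * k + 1 ≤ k * k := by nlinarith
        nlinarith

lemma exp_helper (a b : ℕ) : ∃ k : ℕ, a + b * k < 2 ^ k := by
  refine ⟨a + b + 5, ?_⟩
  have h1 : 4 ≤ a + b + 5 := by omega
  have h2 := sq_le_two_pow (a + b + 5) h1
  nlinarith

lemma binom_helper (D : ℕ) (hD : 1 ≤ D) : 2 * D ^ D ≤ (D + 1) ^ D := by
  have key : ∀ n : ℕ, (D + n) * D ^ n ≤ D * (D + 1) ^ n := by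
    intro n
    induction n with
    | zero => simp
    | succ n ih =>
        have h1 : D ^ n ≤ (D + 1) ^ n := Nat.pow_le_pow_left (by omega) n
        calc (D + (n+1)) * D ^ (n+1) = D * ((D + n) * D ^ n) + D * D ^ n := by ring
        _ ≤ D * (D * (D + 1) ^ n) + D * (D + 1) ^ n := by
            have := Nat.mul_le_mul_left D ih
            have := Nat.mul_le_mul_left D h1
            omega
        _ = D * (D + 1) ^ (n + 1) := by ring
  have h2 := key D
  have h3 : (D + D) * D ^ D = D * (2 * D ^ D) := by ring
  rw [h3] at h2
  exact Nat.le_of_mul_le_mul_left h2 (by omega)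

lemma nn_pow_le (hS : Subgroup.closure S = ⊤) (x : G) : ∀ k : ℕ, nn S (x ^ k) ≤ k * nn S x := by
  intro k
  induction k with
  | zero => simp [(nn_eq_zero_iff hS).2 rfl]
  | succ k ih =>
      have h1 := nn_mul_le hS (x ^ k) x
      have e : (k+1) * nn S x = k * nn S x + nn S x := by ring
      rw [pow_succ]
      omega

lemma nn_zpow_abs (hS : Subgroup.closure S = ⊤) (x : G) (z : ℤ) :
    nn S (x ^ z) = nn S (x ^ z.natAbs) := by
  rcases Int.natAbs_eq z with h | h
  · conv_lhs => rw [h, zpow_natCast]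
  · conv_lhs => rw [h, zpow_neg, zpow_natCast]
    rw [nn_inv hS]

/-- conjugation relation `g c^D g⁻¹ = c^m` forces `|m| ≤ D` -/
lemma conj_exponent_le {S : Set G} {δ : ℕ} (hS : Subgroup.closure S = ⊤)
    {c : G} {t B₁ : ℕ} (ht : 1 ≤ t)
    (hinj : Function.Injective (fun z : ℤ => c ^ z))
    (hlin : ∀ j : ℕ, (4 * δ + 1) * j ≤ t * (nn S (c ^ j) + B₁))
    {D : ℕ} (hD : 1 ≤ D) {g : G} {m : ℤ}
    (hrel : g * c ^ (D : ℤ) * g⁻¹ = c ^ m) :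
    m.natAbs ≤ D := by
  by_contra hcon
  push_neg at hcon
  -- iterate the relation
  have hz : ∀ j : ℤ, g * c ^ ((D : ℤ) * j) * g⁻¹ = c ^ (m * j) := by
    intro j
    have h1 : g * c ^ ((D : ℤ) * j) * g⁻¹ = (MulAut.conj g) ((c ^ (D:ℤ)) ^ j) := by
      simp [MulAut.conj_apply, zpow_mul]
    rw [h1, map_zpow]
    have h2 : (MulAut.conj g) (c ^ (D:ℤ)) = c ^ m := by
      simp only [MulAut.conj_apply]
      exact hrel
    rw [h2, ← zpow_mul, mul_comm]
  have iter : ∀ k : ℕ, g ^ k * c ^ ((D : ℤ) ^ k) * (g ^ k)⁻¹ = c ^ (m ^ k) := by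
    intro k
    induction k with
    | zero => simp
    | succ k ih =>
        have h1 : g ^ (k+1) * c ^ ((D:ℤ) ^ (k+1)) * (g ^ (k+1))⁻¹
            = g * (g ^ k * c ^ ((D:ℤ) ^ k * D) * (g ^ k)⁻¹) * g⁻¹ := by
          rw [pow_succ']
          group
        rw [h1]
        have h2 : g ^ k * c ^ ((D:ℤ) ^ k * D) * (g ^ k)⁻¹ = c ^ (m ^ k * D) := by
          have h3 : c ^ ((D:ℤ) ^ k * D) = (c ^ ((D:ℤ) ^ k)) ^ (D : ℤ) := by
            rw [← zpow_mul]
          have h4 : c ^ ((m:ℤ) ^ k * D) = (c ^ ((m:ℤ) ^ k)) ^ (D : ℤ) := by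
            rw [← zpow_mul]
          rw [h3, h4]
          calc g ^ k * (c ^ ((D:ℤ) ^ k)) ^ (D:ℤ) * (g ^ k)⁻¹
              = (MulAut.conj (g ^ k)) ((c ^ ((D:ℤ) ^ k)) ^ (D:ℤ)) := by
                rw [MulAut.conj_apply]
          _ = ((MulAut.conj (g ^ k)) (c ^ ((D:ℤ) ^ k))) ^ (D:ℤ) := map_zpow _ _ _
          _ = (c ^ ((m:ℤ) ^ k)) ^ (D:ℤ) := by
                rw [MulAut.conj_apply, ih]
        rw [h2]
        have h5 := hz (m ^ k)
        have h6 : (D:ℤ) * m ^ k = m ^ k * D := by ring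
        have h7 : m * m ^ k = m ^ (k + 1) := by ring
        rw [h6, h7] at h5
        exact h5
  -- length bounds
  have upper : ∀ k : ℕ, nn S (c ^ (m ^ k)) ≤ D ^ k * nn S c + 2 * (k * nn S g) := by
    intro k
    have h1 : c ^ (m ^ k) = g ^ k * c ^ ((D:ℤ) ^ k) * (g ^ k)⁻¹ := (iter k).symm
    rw [h1]
    have h2 := nn_conj_le hS (g ^ k) (c ^ ((D:ℤ)^k))
    have h3 : ((D : ℤ) ^ k) = ((D ^ k : ℕ) : ℤ) := by push_cast; ring
    have h4 : nn S (c ^ ((D:ℤ) ^ k)) ≤ D ^ k * nn S c := by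
      rw [h3, zpow_natCast]
      exact nn_pow_le hS c _
    have h5 := nn_pow_le hS g k
    omega
  -- contradiction
  obtain ⟨k, hk⟩ := exp_helper (t * nn S c + t * B₁) (2 * t * D * nn S g)
  set K : ℕ := D * k with hK
  have lower : (4 * δ + 1) * (D + 1) ^ K ≤ t * (nn S (c ^ (m ^ K)) + B₁) := by
    have h1 : (D + 1) ^ K ≤ (m ^ K).natAbs := by
      rw [Int.natAbs_pow]
      exact Nat.pow_le_pow_left (by omega) K
    have h2 := hlin ((m ^ K).natAbs)
    have h3 : nn S (c ^ ((m ^ K).natAbs)) = nn S (c ^ (m ^ K)) := (nn_zpow_abs hS c _).symm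
    rw [h3] at h2
    calc (4 * δ + 1) * (D + 1) ^ K ≤ (4 * δ + 1) * (m ^ K).natAbs :=
          Nat.mul_le_mul_left _ h1
    _ ≤ _ := h2
  have pow_ineq : 2 ^ k * D ^ K ≤ (D + 1) ^ K := by
    have h1 : (D + 1) ^ K = ((D + 1) ^ D) ^ k := by rw [hK, pow_mul]
    have h2 : (2 * D ^ D) ^ k ≤ ((D + 1) ^ D) ^ k :=
      Nat.pow_le_pow_left (binom_helper D hD) k
    have h3 : (2 * D ^ D) ^ k = 2 ^ k * D ^ K := by
      rw [mul_pow, ← pow_mul, ← hK]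
    omega
  have hup := upper K
  have hDK1 : 1 ≤ D ^ K := Nat.one_le_pow _ _ (by omega)
  -- assemble
  have main : (4 * δ + 1) * (2 ^ k * D ^ K) ≤
      D ^ K * (t * nn S c + t * B₁ + 2 * t * D * nn S g * k) := by
    calc (4 * δ + 1) * (2 ^ k * D ^ K) ≤ (4 * δ + 1) * (D + 1) ^ K :=
          Nat.mul_le_mul_left _ pow_ineq
    _ ≤ t * (nn S (c ^ (m ^ K)) + B₁) := lower
    _ ≤ t * (D ^ K * nn S c + 2 * (K * nn S g) + B₁) := by
          have := hup; exact Nat.mul_le_mul_left _ (by omega)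
    _ ≤ D ^ K * (t * nn S c + t * B₁ + 2 * t * D * nn S g * k) := by
          have e1 : t * (D ^ K * nn S c + 2 * (K * nn S g) + B₁)
              = D ^ K * (t * nn S c) + 2 * t * D * nn S g * k + t * B₁ := by
            rw [hK]; ring
          have e2 : 2 * t * D * nn S g * k ≤ D ^ K * (2 * t * D * nn S g * k) :=
            Nat.le_mul_of_pos_left _ (by omega)
          have e3 : t * B₁ ≤ D ^ K * (t * B₁) := Nat.le_mul_of_pos_left _ (by omega)
          calc t * (D ^ K * nn S c + 2 * (K * nn S g) + B₁)
              = D ^ K * (t * nn S c) + 2 * t * D * nn S g * k + t * B₁ := e1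
          _ ≤ D ^ K * (t * nn S c) + D ^ K * (2 * t * D * nn S g * k)
                + D ^ K * (t * B₁) := by omega
          _ = D ^ K * (t * nn S c + t * B₁ + 2 * t * D * nn S g * k) := by ring
  have main2 : (4 * δ + 1) * 2 ^ k ≤ t * nn S c + t * B₁ + 2 * t * D * nn S g * k := by
    have h1 : ((4 * δ + 1) * 2 ^ k) * D ^ K ≤
        (t * nn S c + t * B₁ + 2 * t * D * nn S g * k) * D ^ K := by
      calc ((4 * δ + 1) * 2 ^ k) * D ^ K = (4 * δ + 1) * (2 ^ k * D ^ K) := by ring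
      _ ≤ D ^ K * (t * nn S c + t * B₁ + 2 * t * D * nn S g * k) := main
      _ = (t * nn S c + t * B₁ + 2 * t * D * nn S g * k) * D ^ K := by ring
    exact Nat.le_of_mul_le_mul_right h1 (by omega)
  have h2k : 2 ^ k ≤ (4 * δ + 1) * 2 ^ k := Nat.le_mul_of_pos_left _ (by omega)
  omega


/-! ### Part E2: structure of an infinite virtually cyclic normal subgroup -/

lemma vc_structure (N : Subgroup G) (hvc : VirtuallyCyclic ↥N) (hinf : Infinite ↥N) :
    ∃ (c : G) (f : ℕ), c ∈ N ∧ 1 ≤ f ∧ Function.Injective (fun z : ℤ => c ^ z) ∧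
      ∀ u : G, u ∈ N → ¬IsOfFinOrder u → ∃ z : ℤ, z ≠ 0 ∧ u ^ f = c ^ z := by
  classical
  obtain ⟨H, hHfi, hHcyc⟩ := hvc
  haveI := hHfi
  have hHinf : Infinite ↥H := by
    by_contra hfin
    rw [not_infinite_iff_finite] at hfin
    haveI := hfin
    have : Finite ↥N := Finite.of_equiv _ (Subgroup.groupEquivQuotientProdSubgroup (s := H)).symm
    haveI := this
    haveI := hinf
    exact not_finite ↥N
  obtain ⟨cg, hcg⟩ := @IsCyclic.exists_generator ↥H _ hHcyc
  -- infinite order of the generator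
  have hcgord : ¬IsOfFinOrder cg := by
    intro hfin
    have hfin2 : (Subgroup.zpowers cg : Set ↥H).Finite := hfin.finite_zpowers
    have : (Set.univ : Set ↥H).Finite := by
      refine Set.Finite.subset hfin2 ?_
      intro x _
      exact hcg x
    exact Set.infinite_univ this
  set cN : ↥N := (cg : ↥N) with hcN
  set c : G := (cN : G) with hc
  have hcmem : c ∈ N := cN.2
  have hcord : ¬IsOfFinOrder c := by
    intro hfin
    apply hcgord
    rw [isOfFinOrder_iff_pow_eq_one] at hfin ⊢
    obtain ⟨n, hn, hcn⟩ := hfin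
    refine ⟨n, hn, ?_⟩
    have h1 : ((cg ^ n : ↥H) : G) = c ^ n := by
      push_cast
      rfl
    have h2 : ((cg ^ n : ↥H) : G) = 1 := by rw [h1, hcn]
    have h3 : (cg ^ n : ↥H) = 1 := by
      apply Subtype.ext
      apply Subtype.ext
      exact_mod_cast h2
    exact h3
  have hinj : Function.Injective (fun z : ℤ => c ^ z) :=
    injective_zpow_iff_not_isOfFinOrder.2 hcord
  set dd : ℕ := H.index with hdd
  have hdd0 : dd ≠ 0 := hHfi.index_ne_zero
  refine ⟨c, dd.factorial, hcmem, Nat.factorial_pos dd, hinj, ?_⟩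
  intro u hu hnford
  set uN : ↥N := ⟨u, hu⟩ with huN
  -- pigeonhole in the quotient
  haveI : Finite (↥N ⧸ H) := H.finite_quotient_of_finiteIndex
  have hcard : Nat.card (↥N ⧸ H) = dd := rfl
  have hnotinj : ¬Function.Injective
      (fun i : Fin (dd + 1) => (QuotientGroup.mk (uN ^ (i : ℕ)) : ↥N ⧸ H)) := by
    intro hinj2
    have := Nat.card_le_card_of_injective _ hinj2
    simp [hcard] at this
  rw [Function.not_injective_iff] at hnotinj
  obtain ⟨i, j, heqq, hneq⟩ := hnotinj
  -- wlog i < j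
  have key : ∀ i j : Fin (dd + 1), (i : ℕ) < (j : ℕ) →
      (QuotientGroup.mk (uN ^ (i : ℕ)) : ↥N ⧸ H) = QuotientGroup.mk (uN ^ (j : ℕ)) →
      ∃ z : ℤ, z ≠ 0 ∧ u ^ dd.factorial = c ^ z := by
    intro i j hlt heq
    set e : ℕ := (j : ℕ) - (i : ℕ) with he
    have he1 : 1 ≤ e := by omega
    have heidx : e ≤ dd := by omega
    have hmem : uN ^ e ∈ H := by
      have h1 := QuotientGroup.eq.1 heq
      have h2 : (uN ^ (i:ℕ))⁻¹ * uN ^ (j:ℕ) = uN ^ e := by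
        have h3 : (i:ℕ) + e = (j:ℕ) := by omega
        rw [← h3, pow_add, inv_mul_cancel_left]
      rwa [h2] at h1
    obtain ⟨z₀, hz₀⟩ := Subgroup.mem_zpowers_iff.1 (hcg ⟨uN ^ e, hmem⟩)
    -- coerce to G : u ^ e = c ^ z₀
    have hue : u ^ e = c ^ z₀ := by
      have h1 : ((cg ^ z₀ : ↥H) : ↥N) = uN ^ e := by
        rw [hz₀]
      have h2 : (((cg ^ z₀ : ↥H) : ↥N) : G) = u ^ e := by
        rw [h1]; push_cast; rfl
      have h3 : (((cg ^ z₀ : ↥H) : ↥N) : G) = c ^ z₀ := by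
        push_cast; rfl
      rw [← h2, h3]
    have hdvd : e ∣ dd.factorial := Nat.dvd_factorial he1 heidx
    obtain ⟨q, hq⟩ := hdvd
    have hpow : u ^ dd.factorial = c ^ (z₀ * (q:ℤ)) := by
      rw [hq, pow_mul, hue, ← zpow_natCast (c ^ z₀) q, ← zpow_mul]
    refine ⟨z₀ * (q:ℤ), ?_, hpow⟩
    intro hz
    rw [hz, zpow_zero] at hpow
    exact hnford (isOfFinOrder_iff_pow_eq_one.2 ⟨dd.factorial, Nat.factorial_pos dd, hpow⟩)
  rcases Nat.lt_or_ge (i : ℕ) (j : ℕ) with h | h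
  · exact key i j h heqq
  · have hlt : (j : ℕ) < (i : ℕ) := by
      have : (i:ℕ) ≠ (j:ℕ) := fun hh => hneq (Fin.ext hh)
      omega
    exact key j i hlt heqq.symm


/-! ### Part F: elements commuting with `b` lie near the cyclic line -/

section Cent

variable {S : Set G} {δ : ℕ} (hS : Subgroup.closure S = ⊤) (hδ : FourPt S δ)
include hS hδ

lemma cent_aux (b g : G) (B₂ : ℕ)
    (hprod : ∀ j k : ℕ, (nn S (b ^ j) : ℤ) + nn S (b ^ k) - nn S (b ^ (j + k)) ≤ B₂)
    (hcomm : g * b = b * g)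
    (hmin : ∀ j : ℤ, nn S g ≤ nn S (g * b ^ j))
    (n' : ℕ) (hn'1 : 1 ≤ n')
    (halign : 2 * (nn S g : ℤ) - B₂ - 4 * δ ≤
      (nn S g : ℤ) + nn S (b ^ n') - nn S (g * b ^ (-(n' : ℤ)))) :
    nn S g ≤ B₂ + 4 * δ + nn S b := by
  set X : ℕ := nn S g with hX
  have hcb : Commute g b := hcomm
  have dgbn : ∀ n : ℕ, d S g (b ^ n) = nn S (g * b ^ (-(n:ℤ))) := by
    intro n
    rw [d_eq_nn hS]
    have e1 : g⁻¹ * b ^ n = (g * b ^ (-(n:ℤ)))⁻¹ := by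
      rw [zpow_neg, zpow_natCast, mul_inv_rev, inv_inv]
      exact ((hcb.inv_left).pow_right n).eq
    rw [e1, nn_inv hS]
  by_contra hcon
  push_neg at hcon
  -- dichotomy for 1 ≤ n ≤ n'
  have dich : ∀ n : ℕ, 1 ≤ n → n ≤ n' →
      nn S (b ^ n) ≤ B₂ + 2 * δ ∨ 2 * (X:ℤ) - B₂ - 6 * δ ≤ (nn S (b ^ n) : ℤ) := by
    intro n hn1 hnn'
    have key := hE hδ g (b ^ n') (b ^ n) 1
    simp only [E] at key
    have f1 : d S g (b ^ n') = nn S (g * b ^ (-(n':ℤ))) := dgbn n'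
    have f2 : d S g (b ^ n) = nn S (g * b ^ (-(n:ℤ))) := dgbn n
    have f3 : d S (b ^ n') (b ^ n) = nn S (b ^ (n' - n)) := by
      rw [d_eq_nn hS]
      have e1 : (b ^ n')⁻¹ * b ^ n = (b ^ (n' - n) : G)⁻¹ := by
        rw [← zpow_natCast b n', ← zpow_natCast b n, ← zpow_natCast b (n'-n),
          ← zpow_neg, ← zpow_neg, ← zpow_add]
        congr 1
        omega
      rw [e1, nn_inv hS]
    have f4 := hmin (-(n:ℤ))
    have f5 := hprod (n' - n) n
    have e3 : n' - n + n = n' := by omega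
    rw [e3] at f5
    have g1 : d S g 1 = X := by rw [hX, nn, d_comm]
    have g2 : d S (b ^ n') 1 = nn S (b ^ n') := by rw [d_comm]; rfl
    have g3 : d S (b ^ n) 1 = nn S (b ^ n) := by rw [d_comm]; rfl
    rw [f1, f2, f3, g1, g2, g3] at key
    omega
  -- the alignment gives that nn (b^n') is large
  have hbig : (X : ℤ) + 1 ≤ (nn S (b ^ n') : ℤ) := by
    have h1 := hmin (-(n':ℤ))
    omega
  -- find the least threshold
  have hP : ∃ n : ℕ, B₂ + 2 * δ + 1 ≤ nn S (b ^ (n + 1)) ∧ n + 1 ≤ n' := by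
    refine ⟨n' - 1, ?_, by omega⟩
    have e1 : n' - 1 + 1 = n' := by omega
    rw [e1]
    omega
  classical
  set m := Nat.find hP with hm
  have hPm : B₂ + 2 * δ + 1 ≤ nn S (b ^ (m + 1)) ∧ m + 1 ≤ n' := Nat.find_spec hP
  have hprev : nn S (b ^ m) ≤ B₂ + 2 * δ := by
    have h2 := hPm.2
    rcases Nat.eq_zero_or_pos m with h0 | h0
    · rw [h0, pow_zero]
      simp [(nn_eq_zero_iff hS).2 rfl]
    · by_contra hc
      push_neg at hc
      have hmin' : ¬(B₂ + 2 * δ + 1 ≤ nn S (b ^ ((m-1) + 1)) ∧ (m-1) + 1 ≤ n') :=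
        Nat.find_min hP (by omega)
      have e1 : m - 1 + 1 = m := by omega
      rw [e1] at hmin'
      exact hmin' ⟨by omega, by omega⟩
  have hstep : nn S (b ^ (m + 1)) ≤ nn S (b ^ m) + nn S b := by
    rw [pow_succ]
    exact nn_mul_le hS _ _
  have hd := dich (m + 1) (by omega) hPm.2
  omega

lemma cent_bound (b g : G) (B₂ : ℕ)
    (hprod : ∀ j k : ℕ, (nn S (b ^ j) : ℤ) + nn S (b ^ k) - nn S (b ^ (j + k)) ≤ B₂)
    (hgrow : ∀ A : ℕ, ∃ n : ℕ, 1 ≤ n ∧ A ≤ nn S (b ^ n))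
    (hcomm : g * b = b * g)
    (hmin : ∀ j : ℤ, nn S g ≤ nn S (g * b ^ j)) :
    nn S g ≤ B₂ + 4 * δ + nn S b := by
  set X : ℕ := nn S g with hX
  have hcb : Commute g b := hcomm
  obtain ⟨n', hn'1, hn'X⟩ := hgrow X
  -- doubled Gromov quantities
  set Sq : ℤ := (nn S (g * b ^ (n' : ℤ)) : ℤ) + X - nn S (b ^ n') with hSq
  set Tq : ℤ := (nn S (g * b ^ (-(n' : ℤ))) : ℤ) + X - nn S (b ^ n') with hTq
  -- conversions
  have nz : nn S (b ^ ((n' : ℤ))) = nn S (b ^ n') := by rw [zpow_natCast]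
  have key1 := hE hδ (g * b ^ ((n' : ℤ))) g (g * b ^ (-(n' : ℤ))) 1
  simp only [E] at key1
  have dA : d S (g * b ^ ((n' : ℤ))) (g * b ^ (-(n' : ℤ))) = nn S (b ^ (n' + n')) := by
    rw [d_eq_nn hS]
    have e1 : (g * b ^ ((n' : ℤ)))⁻¹ * (g * b ^ (-(n' : ℤ)))
        = (b ^ (n' + n' : ℕ) : G)⁻¹ := by
      rw [mul_inv_rev, mul_assoc, inv_mul_cancel_left, ← zpow_neg, ← zpow_add,
        ← zpow_natCast b (n' + n'), ← zpow_neg]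
      congr 1
      push_cast
      ring
    rw [e1, nn_inv hS]
  have dB : d S (g * b ^ ((n' : ℤ))) g = nn S (b ^ n') := by
    rw [d_comm, d_eq_nn hS, inv_mul_cancel_left, zpow_natCast]
  have dC : d S g (g * b ^ (-(n' : ℤ))) = nn S (b ^ n') := by
    rw [d_eq_nn hS, inv_mul_cancel_left, zpow_neg, zpow_natCast, nn_inv hS]
  have g1 : d S (g * b ^ ((n' : ℤ))) 1 = nn S (g * b ^ ((n' : ℤ))) := by rw [d_comm]; rfl
  have g2 : d S g 1 = X := by rw [hX, nn, d_comm]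
  have g3 : d S (g * b ^ (-(n' : ℤ))) 1 = nn S (g * b ^ (-(n' : ℤ))) := by rw [d_comm]; rfl
  rw [dA, dB, dC, g1, g2, g3] at key1
  have i2 := hprod n' n'
  -- second inequality : S + T ≤ 2X + 2δ
  have key2 := hE hδ g (g * b ^ ((n' : ℤ))) (b ^ n') 1
  simp only [E] at key2
  have dD : d S g (g * b ^ ((n' : ℤ))) = nn S (b ^ n') := by
    rw [d_eq_nn hS, inv_mul_cancel_left, zpow_natCast]
  have dE2 : d S (g * b ^ ((n' : ℤ))) (b ^ n') = X := by
    rw [d_eq_nn hS]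
    have e1 : (g * b ^ ((n' : ℤ)))⁻¹ * b ^ n' = g⁻¹ := by
      rw [mul_inv_rev, ← zpow_natCast b n', mul_assoc,
        ((hcb.inv_left).zpow_right ((n':ℤ))).eq, inv_mul_cancel_left]
    rw [e1, nn_inv hS, hX]
  have dF : d S g (b ^ n') = nn S (g * b ^ (-(n' : ℤ))) := by
    rw [d_eq_nn hS]
    have e1 : g⁻¹ * b ^ n' = (g * b ^ (-(n':ℤ)))⁻¹ := by
      rw [zpow_neg, zpow_natCast, mul_inv_rev, inv_inv]
      exact ((hcb.inv_left).pow_right n').eq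
    rw [e1, nn_inv hS]
  have g4 : d S (b ^ n') 1 = nn S (b ^ n') := by rw [d_comm]; rfl
  rw [dD, dE2, dF, g2, g1, g4] at key2
  -- minimality instances
  have m1 := hmin ((n' : ℤ))
  have m2 := hmin (-(n' : ℤ))
  -- dichotomy
  have hdich : Tq ≤ B₂ + 4 * δ ∨ Sq ≤ B₂ + 4 * δ := by omega
  rcases hdich with hT | hS2
  · -- aligned with b
    exact cent_aux hS hδ b g B₂ hprod hcomm hmin n' hn'1 (by omega)
  · -- aligned with b⁻¹
    have hprod' : ∀ j k : ℕ, (nn S (b⁻¹ ^ j) : ℤ) + nn S (b⁻¹ ^ k) - nn S (b⁻¹ ^ (j + k)) ≤ B₂ := by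
      intro j k
      simp only [inv_pow, nn_inv hS]
      exact hprod j k
    have hcomm' : g * b⁻¹ = b⁻¹ * g := (hcb.inv_right).eq
    have hmin' : ∀ j : ℤ, nn S g ≤ nn S (g * b⁻¹ ^ j) := by
      intro j
      rw [inv_zpow, ← zpow_neg]
      exact hmin (-j)
    have halign' : 2 * (nn S g : ℤ) - B₂ - 4 * δ ≤
        (nn S g : ℤ) + nn S (b⁻¹ ^ n') - nn S (g * b⁻¹ ^ (-(n' : ℤ))) := by
      have e1 : nn S (b⁻¹ ^ n') = nn S (b ^ n') := by rw [inv_pow, nn_inv hS]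
      have e2 : g * b⁻¹ ^ (-(n' : ℤ)) = g * b ^ ((n' : ℤ)) := by
        rw [inv_zpow, ← zpow_neg, neg_neg]
      rw [e1, e2]
      omega
    have := cent_aux hS hδ b⁻¹ g B₂ hprod' hcomm' hmin' n' hn'1 halign'
    rwa [nn_inv hS] at this

end Cent


/-! ### Part G: final assembly -/

lemma conj_eq_iff_comm {a x : G} : a * x * a⁻¹ = x ↔ a * x = x * a := by
  constructor
  · intro h
    have h2 := congrArg (· * a) h
    simpa [mul_assoc] using h2
  · intro h
    rw [h, mul_inv_cancel_right]

lemma conj_zpow_rel {c g : G} {D : ℕ} {m : ℤ} (hrel : g * c ^ (D:ℤ) * g⁻¹ = c ^ m) (j : ℤ) :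
    g * c ^ ((D:ℤ) * j) * g⁻¹ = c ^ (m * j) := by
  have h1 : g * c ^ ((D : ℤ) * j) * g⁻¹ = (MulAut.conj g) ((c ^ (D:ℤ)) ^ j) := by
    rw [MulAut.conj_apply, ← zpow_mul]
  rw [h1, map_zpow]
  have h2 : (MulAut.conj g) (c ^ (D:ℤ)) = c ^ m := by
    rw [MulAut.conj_apply]; exact hrel
  rw [h2, ← zpow_mul, mul_comm]

lemma conj_not_finOrder {c : G} (hinj : Function.Injective (fun z : ℤ => c ^ z))
    (q : G) (k : ℕ) (hk : 1 ≤ k) : ¬IsOfFinOrder (q * c ^ k * q⁻¹) := by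
  intro h
  obtain ⟨n, hn, h1⟩ := isOfFinOrder_iff_pow_eq_one.1 h
  rw [conj_pow, ← pow_mul] at h1
  have h2 : c ^ (k * n) = 1 := by
    have h3 := congrArg (fun x => q⁻¹ * x * q) h1
    simpa [mul_assoc] using h3
  have h3 : (fun z : ℤ => c ^ z) ((k * n : ℕ) : ℤ) = (fun z : ℤ => c ^ z) (0 : ℤ) := by
    simp only [zpow_natCast, zpow_zero, h2]
  have h4 := hinj h3
  have h5 : k * n ≠ 0 := by positivity
  exact h5 (by exact_mod_cast h4)

theorem main_theorem (hG : IsHyperbolicGroup G) (N : Subgroup G) (hN : N.Normal)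
    (hvc : VirtuallyCyclic ↥N) :
    Finite ↥N ∨ N.FiniteIndex := by
  classical
  by_cases hfin : Finite ↥N
  · exact Or.inl hfin
  right
  rw [not_finite_iff_infinite] at hfin
  obtain ⟨S, hS, δ, hδ0⟩ := hG
  have hδ : FourPt (S : Set G) δ := hδ0
  obtain ⟨c, f, hcN, hf1, hinj, hU⟩ := vc_structure N hvc hfin
  set D : ℕ := f * f with hDdef
  have hD1 : 1 ≤ D := by
    rw [hDdef]; exact Nat.one_le_iff_ne_zero.2 (Nat.mul_ne_zero (by omega) (by omega))
  -- the conjugation relation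
  have hmrel : ∀ g : G, ∃ m : ℤ, m ≠ 0 ∧ g * c ^ (D:ℤ) * g⁻¹ = c ^ m := by
    intro g
    have hu : g * c ^ f * g⁻¹ ∈ N := hN.conj_mem _ (N.pow_mem hcN f) g
    have hford := conj_not_finOrder hinj g f hf1
    obtain ⟨z, hz0, hz⟩ := hU _ hu hford
    refine ⟨z, hz0, ?_⟩
    have h1 : (g * c ^ f * g⁻¹) ^ f = g * c ^ (f * f) * g⁻¹ := by
      rw [conj_pow, ← pow_mul]
    rw [h1] at hz
    rw [zpow_natCast, ← hDdef] at *
    exact hz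
  -- existence of a long minimal conjugate
  have hgood : ∃ (tt : ℕ) (p₀ : G), 1 ≤ tt ∧
      (∀ p : G, nn (S:Set G) (p₀ * c ^ tt * p₀⁻¹) ≤ nn (S:Set G) (p * (p₀ * c ^ tt * p₀⁻¹) * p⁻¹)) ∧
      10 * δ + 2 ≤ nn (S:Set G) (p₀ * c ^ tt * p₀⁻¹) := by
    by_contra hbad
    push_neg at hbad
    have hshort : ∀ tt : ℕ, 1 ≤ tt → ∃ q : G, nn (S:Set G) (q * c ^ tt * q⁻¹) ≤ 10*δ+1 := by
      intro tt htt
      set A : Set ℕ := Set.range (fun p : G => nn (S:Set G) (p * c ^ tt * p⁻¹)) with hA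
      have hAne : A.Nonempty := ⟨_, ⟨(1:G), rfl⟩⟩
      obtain ⟨p₀, hp₀⟩ : ∃ p₀ : G, nn (S:Set G) (p₀ * c ^ tt * p₀⁻¹) = sInf A :=
        Set.mem_range.1 (Nat.sInf_mem hAne)
      have hminp : ∀ p : G, nn (S:Set G) (p₀ * c ^ tt * p₀⁻¹) ≤
          nn (S:Set G) (p * (p₀ * c ^ tt * p₀⁻¹) * p⁻¹) := by
        intro p
        have e1 : p * (p₀ * c ^ tt * p₀⁻¹) * p⁻¹ = (p * p₀) * c ^ tt * (p * p₀)⁻¹ := by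
          group
        rw [e1, hp₀]
        exact Nat.sInf_le ⟨p * p₀, rfl⟩
      have := hbad tt p₀ htt hminp
      exact ⟨p₀, by omega⟩
    -- the finite set of short infinite-order elements of N
    set U : Set G := {u | u ∈ N ∧ nn (S:Set G) u ≤ 10*δ+1 ∧ ¬IsOfFinOrder u} with hUdef
    have hUfin : U.Finite := (ball_finite S hS (10*δ+1)).subset (fun u hu => hu.2.1)
    set φ : G → ℤ := fun u =>
      if h : ∃ z : ℤ, z ≠ 0 ∧ u ^ f = c ^ z then h.choose else 0 with hφdef
    set S₀ : ℕ := hUfin.toFinset.sup (fun u => (φ u).natAbs) with hS₀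
    obtain ⟨q, hq⟩ := hshort ((S₀+1) * D)
      (Nat.one_le_iff_ne_zero.2 (Nat.mul_ne_zero (by omega) (by omega)))
    set u : G := q * c ^ ((S₀+1)*D) * q⁻¹ with hu
    have huN : u ∈ N := hN.conj_mem _ (N.pow_mem hcN _) q
    have huford : ¬IsOfFinOrder u := conj_not_finOrder hinj q _
      (Nat.one_le_iff_ne_zero.2 (Nat.mul_ne_zero (by omega) (by omega)))
    have huU : u ∈ U := ⟨huN, hq, huford⟩
    have hφu : (φ u) ≠ 0 ∧ u ^ f = c ^ (φ u) := by
      have hex : ∃ z : ℤ, z ≠ 0 ∧ u ^ f = c ^ z := hU u huN huford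
      rw [hφdef]
      simp only [dif_pos hex]
      exact ⟨hex.choose_spec.1, hex.choose_spec.2⟩
    have hφle : (φ u).natAbs ≤ S₀ := by
      rw [hS₀]
      exact Finset.le_sup (f := fun u => (φ u).natAbs) (hUfin.mem_toFinset.2 huU)
    obtain ⟨mq, hmq0, hmq⟩ := hmrel q
    -- compute u ^ f two ways
    have e1 : u ^ f = q * c ^ (((S₀+1)*D*f : ℕ) : ℤ) * q⁻¹ := by
      rw [hu, conj_pow, ← pow_mul, zpow_natCast]
    have e2 : q * c ^ (((S₀+1)*D*f : ℕ) : ℤ) * q⁻¹ = c ^ (mq * ((S₀+1)*f : ℕ)) := by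
      have h3 := conj_zpow_rel hmq (((S₀+1)*f : ℕ) : ℤ)
      have e3 : ((D:ℤ)) * (((S₀+1)*f : ℕ) : ℤ) = (((S₀+1)*D*f : ℕ) : ℤ) := by
        push_cast; ring
      rw [e3] at h3
      exact h3
    have e4 : c ^ (φ u) = c ^ (mq * ((S₀+1)*f : ℕ)) := by
      rw [← hφu.2, e1, e2]
    have e5 : φ u = mq * ((S₀+1)*f : ℕ) := hinj e4
    have e6 : (S₀+1) ≤ (φ u).natAbs := by
      rw [e5, Int.natAbs_mul]
      have h7 : 1 ≤ mq.natAbs := by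
        rcases Int.natAbs_eq_zero.not.2 hmq0 with h
        omega
      have h8 : (((S₀+1)*f : ℕ) : ℤ).natAbs = (S₀+1)*f := Int.natAbs_natCast _
      rw [h8]
      calc S₀ + 1 ≤ (S₀+1) * f := Nat.le_mul_of_pos_right _ (by omega)
      _ ≤ mq.natAbs * ((S₀+1) * f) := Nat.le_mul_of_pos_left _ (by omega)
    omega
  obtain ⟨tt, p₀, htt1, hwmin, hwlen⟩ := hgood
  obtain ⟨B₁, B₂, hprod, hlin⟩ := line_bounds hS hδ htt1 hwmin hwlen
  -- every conjugation of c^D is by ±1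
  set b : G := c ^ D with hbdef
  have hbN : b ∈ N := N.pow_mem hcN D
  have hpm : ∀ g : G, g * b * g⁻¹ = b ∨ g * b * g⁻¹ = b⁻¹ := by
    intro g
    obtain ⟨m, hm0, hm⟩ := hmrel g
    obtain ⟨m', hm'0, hm'⟩ := hmrel g⁻¹
    have hle : m.natAbs ≤ D := conj_exponent_le hS htt1 hinj hlin hD1 hm
    have hle' : m'.natAbs ≤ D := conj_exponent_le hS htt1 hinj hlin hD1 hm'
    -- m * m' = D^2
    have hmm' : m' * m = (D:ℤ) * D := by
      have h1 := conj_zpow_rel hm' m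
      -- g⁻¹ * c^(D * m) * g = c^(m' * m)
      rw [inv_inv] at h1
      have h2 : g⁻¹ * c ^ ((D:ℤ) * m) * g = c ^ ((D:ℤ) * D) := by
        have h3 : c ^ ((D:ℤ) * m) = (c ^ m) ^ ((D:ℤ)) := by rw [← zpow_mul, mul_comm]
        have h4 : g⁻¹ * (c ^ m) ^ ((D:ℤ)) * g = (g⁻¹ * c ^ m * g) ^ ((D:ℤ)) := by
          have h6 := map_zpow (MulAut.conj g⁻¹) (c ^ m) ((D:ℤ))
          simpa [MulAut.conj_apply] using h6
        have h5 : g⁻¹ * c ^ m * g = c ^ ((D:ℤ)) := by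
          rw [← hm]; group
        rw [h3, h4, h5, ← zpow_mul, mul_comm]
      rw [h2] at h1
      exact (hinj h1.symm)
    have hnat : m.natAbs * m'.natAbs = D * D := by
      have h1 : (m' * m).natAbs = ((D:ℤ) * D).natAbs := by rw [hmm']
      rw [Int.natAbs_mul, Int.natAbs_mul] at h1
      simp only [Int.natAbs_natCast] at h1
      rw [Nat.mul_comm] at h1
      exact h1
    have habs : m.natAbs = D := by
      have h1 : m.natAbs * m'.natAbs ≤ m.natAbs * D := Nat.mul_le_mul_left _ hle'
      rw [hnat] at h1
      have h2 : D ≤ m.natAbs := Nat.le_of_mul_le_mul_right h1 (by omega)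
      omega
    rcases Int.natAbs_eq m with h | h
    · left
      rw [hbdef, ← zpow_natCast c D, hm, h, habs]
    · right
      rw [hbdef, ← zpow_natCast c D, hm, h, habs, zpow_neg, zpow_natCast]
  -- bounds for the b-line
  have hprodb : ∀ j k : ℕ, (nn (S:Set G) (b ^ j) : ℤ) + nn (S:Set G) (b ^ k)
      - nn (S:Set G) (b ^ (j + k)) ≤ B₂ := by
    intro j k
    have h0 := hprod (D * j) (D * k)
    have e1 : c ^ (D * j) = b ^ j := by rw [hbdef, ← pow_mul]
    have e2 : c ^ (D * k) = b ^ k := by rw [hbdef, ← pow_mul]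
    have e3 : c ^ (D * j + D * k) = b ^ (j + k) := by
      rw [hbdef, ← pow_mul]
      congr 1
      ring
    rw [e1, e2, e3] at h0
    exact h0
  have hgrowb : ∀ A : ℕ, ∃ n : ℕ, 1 ≤ n ∧ A ≤ nn (S:Set G) (b ^ n) := by
    intro A
    set n : ℕ := tt * (A + B₁ + 1) with hn
    have hn1 : 1 ≤ n := Nat.one_le_iff_ne_zero.2 (Nat.mul_ne_zero (by omega) (by omega))
    refine ⟨n, hn1, ?_⟩
    have h1 := hlin (D * n)
    have e1 : c ^ (D * n) = b ^ n := by rw [hbdef, ← pow_mul]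
    rw [e1] at h1
    have h2 : n ≤ (4 * δ + 1) * (D * n) := by
      calc n ≤ D * n := Nat.le_mul_of_pos_left _ (by omega)
      _ ≤ (4*δ+1) * (D * n) := Nat.le_mul_of_pos_left _ (by omega)
    have h3 : tt * (A + B₁ + 1) ≤ tt * (nn (S:Set G) (b^n) + B₁) := by omega
    have h4 : A + B₁ + 1 ≤ nn (S:Set G) (b^n) + B₁ :=
      Nat.le_of_mul_le_mul_left h3 (by omega)
    omega
  -- coset representatives for commuting elements
  set K₀ : ℕ := B₂ + 4 * δ + nn (S:Set G) b with hK₀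
  have hrep : ∀ g : G, g * b = b * g →
      ∃ v : G, nn (S:Set G) v ≤ K₀ ∧ v⁻¹ * g ∈ N := by
    intro g hcomm
    set A : Set ℕ := Set.range (fun j : ℤ => nn (S:Set G) (g * b ^ j)) with hA
    have hAne : A.Nonempty := ⟨_, ⟨(0:ℤ), rfl⟩⟩
    obtain ⟨j₀, hj₀⟩ : ∃ j₀ : ℤ, nn (S:Set G) (g * b ^ j₀) = sInf A :=
      Set.mem_range.1 (Nat.sInf_mem hAne)
    set v : G := g * b ^ j₀ with hv
    have hminv : ∀ j : ℤ, nn (S:Set G) v ≤ nn (S:Set G) (v * b ^ j) := by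
      intro j
      rw [hv, hj₀, mul_assoc, ← zpow_add]
      exact Nat.sInf_le ⟨j₀ + j, rfl⟩
    have hcommv : v * b = b * v := by
      have h1 : Commute g b := hcomm
      exact (Commute.mul_left h1 ((Commute.refl b).zpow_left j₀)).eq
    have hnv := cent_bound hS hδ b v B₂ hprodb hgrowb hcommv hminv
    refine ⟨v, by rw [hK₀]; exact hnv, ?_⟩
    have e1 : v⁻¹ * g = b ^ (-j₀) := by rw [hv, zpow_neg]; group
    rw [e1]
    exact N.zpow_mem hbN _
  -- finitely many cosets
  have hquot : Finite (G ⧸ N) := by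
    by_cases hall : ∀ g : G, g * b = b * g
    · set F : Set G := {x | nn (S:Set G) x ≤ K₀} with hF
      have hFfin : F.Finite := ball_finite S hS K₀
      haveI := hFfin.to_subtype
      apply Finite.of_surjective (fun x : ↥F => (QuotientGroup.mk (x : G) : G ⧸ N))
      intro y
      obtain ⟨g, rfl⟩ := QuotientGroup.mk_surjective y
      obtain ⟨v, hv1, hv2⟩ := hrep g (hall g)
      exact ⟨⟨v, hv1⟩, QuotientGroup.eq.2 hv2⟩
    · push_neg at hall
      obtain ⟨h₀, hh₀⟩ := hall
      have hh₀b : h₀ * b * h₀⁻¹ = b⁻¹ := by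
        rcases hpm h₀ with h | h
        · exact absurd (conj_eq_iff_comm.1 h) hh₀
        · exact h
      set F : Set G := {x | nn (S:Set G) x ≤ K₀} ∪
        (fun u => h₀ * u) '' {x | nn (S:Set G) x ≤ K₀} with hF
      have hFfin : F.Finite :=
        (ball_finite S hS K₀).union ((ball_finite S hS K₀).image _)
      haveI := hFfin.to_subtype
      apply Finite.of_surjective (fun x : ↥F => (QuotientGroup.mk (x : G) : G ⧸ N))
      intro y
      obtain ⟨g, rfl⟩ := QuotientGroup.mk_surjective y
      by_cases hg : g * b = b * g
      · obtain ⟨v, hv1, hv2⟩ := hrep g hg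
        exact ⟨⟨v, Or.inl hv1⟩, QuotientGroup.eq.2 hv2⟩
      · have hgb : g * b * g⁻¹ = b⁻¹ := by
          rcases hpm g with h | h
          · exact absurd (conj_eq_iff_comm.1 h) hg
          · exact h
        have hk : (h₀⁻¹ * g) * b = b * (h₀⁻¹ * g) := by
          apply conj_eq_iff_comm.1
          have e1 : (h₀⁻¹ * g) * b * (h₀⁻¹ * g)⁻¹ = h₀⁻¹ * (g * b * g⁻¹) * h₀ := by
            group
          rw [e1, hgb]
          have e3 := congrArg (fun x => h₀⁻¹ * x * h₀) hh₀b
          have e4 : h₀⁻¹ * (h₀ * b * h₀⁻¹) * h₀ = b := by group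
          rw [e4] at e3
          exact e3.symm
        obtain ⟨v, hv1, hv2⟩ := hrep (h₀⁻¹ * g) hk
        refine ⟨⟨h₀ * v, Or.inr ⟨v, hv1, rfl⟩⟩, ?_⟩
        apply QuotientGroup.eq.2
        have e1 : (h₀ * v)⁻¹ * g = v⁻¹ * (h₀⁻¹ * g) := by group
        rw [e1]
        exact hv2
  exact @Subgroup.finiteIndex_of_finite_quotient G _ N hquot

end VCN

/-- A virtually cyclic normal subgroup of a Gromov hyperbolic group is
either finite or of finite index. -/
theorem virtuallyCyclic_normal_subgroup_of_hyperbolic {G : Type} [Group G]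
    (hG : IsHyperbolicGroup G) (N : Subgroup G) (hN : N.Normal)
    (hvc : VirtuallyCyclic ↥N) :
    Finite ↥N ∨ N.FiniteIndex :=
  VCN.main_theorem hG N hN hvc

end
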